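/- Let m be a nonnegative integer, let (c_j)_{j≥1} be complex numbers, set u = −m(m+1)z⁻² + Σ_{j≥1} c_j z^j ∈ ℂ((z)), and fix λ ∈ ℂ. Then the set of ψ ∈ ℂ((z)) satisfying ψ'' + uψ = λψ contains two linearly independent elements if and only if there exists a solution of the form ψ = Σ_{n≥0} a_n z^{n−m} with a₀ = 1. -/

import Mathlib

open HahnSeries

/-- The formal derivative of a formal Laurent series `Σₙ aₙ zⁿ ↦ Σₙ n aₙ z^{n−1}`. -/
noncomputable def laurentDeriv (f : LaurentSeries ℂ) : LaurentSeries ℂ where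
  coeff n := ((n + 1 : ℤ) : ℂ) * f.coeff (n + 1)
  isPWO_support' := by
    refine Set.IsPWO.mono (Set.IsPWO.image_of_monotone f.isPWO_support
      (f := fun m : ℤ => m - 1) (fun a b hab => by simpa using hab)) ?_
    intro n hn
    have h1 : f.coeff (n + 1) ≠ 0 := by
      intro h0
      simp only [Function.mem_support, h0, mul_zero, ne_eq, not_true_eq_false] at hn
    exact ⟨n + 1, h1, by ring⟩

namespace Scr

lemma laurentDeriv_coeff (f : LaurentSeries ℂ) (n : ℤ) :
    (laurentDeriv f).coeff n = ((n + 1 : ℤ) : ℂ) * f.coeff (n + 1) := rfl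

lemma laurentDeriv_smul (r : ℂ) (f : LaurentSeries ℂ) :
    laurentDeriv (r • f) = r • laurentDeriv f := by
  ext n
  simp only [laurentDeriv_coeff, HahnSeries.coeff_smul, smul_eq_mul]
  ring

lemma laurentDeriv_sub (f g : LaurentSeries ℂ) :
    laurentDeriv (f - g) = laurentDeriv f - laurentDeriv g := by
  ext n
  simp only [laurentDeriv_coeff, HahnSeries.coeff_sub]
  ring

lemma ofPS_coeff_neg (P : PowerSeries ℂ) (n : ℤ) (h : n < 0) :
    (ofPowerSeries ℤ ℂ P).coeff n = 0 := by
  rw [ofPowerSeries_apply]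
  refine embDomain_notin_range ?_
  rintro ⟨k, hk⟩
  have : ((k : ℕ) : ℤ) = n := hk
  omega

lemma ofPS_coeff_nonneg (P : PowerSeries ℂ) (n : ℤ) (h : 0 ≤ n) :
    (ofPowerSeries ℤ ℂ P).coeff n = PowerSeries.coeff n.toNat P := by
  conv_lhs => rw [show n = ((n.toNat : ℕ) : ℤ) from by omega]
  rw [ofPowerSeries_apply_coeff]

lemma single_mul_coeff' (s : ℤ) (r : ℂ) (x : LaurentSeries ℂ) (k : ℤ) :
    (single s r * x).coeff k = r * x.coeff (k - s) := by
  have := @HahnSeries.coeff_single_mul_add ℤ ℂ _ _ _ _ r x (k - s) s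
  rwa [sub_add_cancel] at this

variable (m : ℕ) (c : ℕ → ℂ) (lam : ℂ)

noncomputable def L (s : ℤ) (b : ℕ → ℂ) : LaurentSeries ℂ :=
  single s 1 * ofPowerSeries ℤ ℂ (PowerSeries.mk b)

noncomputable def tailPS : PowerSeries ℂ := PowerSeries.mk fun j => if j = 0 then 0 else c j

noncomputable def d (b : ℕ → ℂ) (t : ℕ) : ℂ :=
  ∑ p ∈ Finset.HasAntidiagonal.antidiagonal t, (if p.1 = 0 then 0 else c p.1) * b p.2

lemma tail_mul_mk (b : ℕ → ℂ) :
    tailPS c * PowerSeries.mk b = PowerSeries.mk (d c b) := by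
  ext t
  rw [PowerSeries.coeff_mul]
  simp [tailPS, d]

lemma tail_mul_L (s : ℤ) (b : ℕ → ℂ) :
    ofPowerSeries ℤ ℂ (tailPS c) * L s b = L s (d c b) := by
  rw [L, L, mul_left_comm, ← map_mul, tail_mul_mk]

lemma L_coeff (s : ℤ) (b : ℕ → ℂ) (k : ℤ) :
    (L s b).coeff k = if s ≤ k then b (k - s).toNat else 0 := by
  rw [L, single_mul_coeff', one_mul]
  split_ifs with h
  · rw [ofPS_coeff_nonneg _ _ (by omega), PowerSeries.coeff_mk]
  · exact ofPS_coeff_neg _ _ (by omega)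

noncomputable def mu : ℂ := (m : ℂ) * ((m : ℂ) + 1)

noncomputable def U : LaurentSeries ℂ :=
  single (-2 : ℤ) (-mu m) + ofPowerSeries ℤ ℂ (tailPS c)

lemma E_coeff (s : ℤ) (b : ℕ → ℂ) (k : ℤ) :
    (laurentDeriv (laurentDeriv (L s b)) + U m c * L s b - lam • L s b).coeff k =
    (if s ≤ k + 2 then
      ((((k+2)*(k+1) : ℤ) : ℂ) - mu m) * b (k + 2 - s).toNat
        + (if s ≤ k then d c b (k - s).toNat - lam * b (k - s).toNat else 0)
    else 0) := by
  simp only [HahnSeries.coeff_sub, HahnSeries.coeff_add, U, add_mul, single_mul_coeff',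
    tail_mul_L, laurentDeriv_coeff, HahnSeries.coeff_smul, smul_eq_mul]
  rw [show k + 1 + 1 = k + 2 from by ring, show k - -2 = k + 2 from by ring]
  simp only [L_coeff]
  split_ifs with h1 h2
  · push_cast; ring
  · push_cast; ring
  · omega
  · push_cast; ring

noncomputable def A (s : ℤ) (t : ℕ) : ℂ :=
  (((s + t) * (s + t - 1) : ℤ) : ℂ) - mu m

lemma sol_iff (s : ℤ) (b : ℕ → ℂ) :
    (laurentDeriv (laurentDeriv (L s b)) + U m c * L s b = lam • L s b) ↔
    ∀ t : ℕ, A m s t * b t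
      + (if 2 ≤ t then d c b (t - 2) - lam * b (t - 2) else 0) = 0 := by
  rw [← sub_eq_zero]
  constructor
  · intro h t
    have hE := E_coeff m c lam s b (s + t - 2)
    rw [h, HahnSeries.coeff_zero] at hE
    rw [if_pos (by omega : s ≤ s + (t:ℤ) - 2 + 2)] at hE
    rw [show s + (t:ℤ) - 2 + 2 = s + t from by ring,
      show s + (t:ℤ) - 2 + 1 = s + t - 1 from by ring,
      show (s + (t:ℤ) - s).toNat = t from by omega,
      show s + (t:ℤ) - 2 - s = (t:ℤ) - 2 from by ring,
      show ((t:ℤ) - 2).toNat = t - 2 from by omega] at hE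
    by_cases h2 : 2 ≤ t
    · rw [if_pos (by omega : s ≤ s + (t:ℤ) - 2)] at hE
      rw [if_pos h2, A]
      exact hE.symm
    · rw [if_neg (by omega : ¬ s ≤ s + (t:ℤ) - 2)] at hE
      rw [if_neg h2, A]
      exact hE.symm
  · intro h
    ext k
    rw [E_coeff, HahnSeries.coeff_zero]
    by_cases h1 : s ≤ k + 2
    · rw [if_pos h1]
      have htz : ((k + 2 - s).toNat : ℤ) = k + 2 - s := by omega
      have hgoal := h (k + 2 - s).toNat
      rw [A, show s + ((k + 2 - s).toNat : ℤ) = k + 2 from by omega] at hgoal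
      rw [show (k:ℤ) + 2 - 1 = k + 1 from by ring] at hgoal
      by_cases h2 : s ≤ k
      · rw [if_pos (by omega : 2 ≤ (k + 2 - s).toNat),
          show (k + 2 - s).toNat - 2 = (k - s).toNat from by omega] at hgoal
        rw [if_pos h2]
        exact hgoal
      · rw [if_neg (by omega : ¬ 2 ≤ (k + 2 - s).toNat)] at hgoal
        rw [if_neg h2]
        exact hgoal
    · rw [if_neg h1]

lemma mu_cast : mu m = (((m : ℤ) * ((m : ℤ) + 1) : ℤ) : ℂ) := by
  rw [mu]; push_cast; ring

lemma A_zero_m1 : A m ((m:ℤ) + 1) 0 = 0 := by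
  rw [A, mu_cast]
  push_cast
  ring

lemma A_zero_neg : A m (-(m:ℤ)) 0 = 0 := by
  rw [A, mu_cast]
  push_cast
  ring

lemma A_ne_zero (t : ℕ) (ht : 1 ≤ t) : A m ((m:ℤ) + 1) t ≠ 0 := by
  rw [A, mu_cast, ← Int.cast_sub, Int.cast_ne_zero]
  have : ((m:ℤ) + 1 + t) * ((m:ℤ) + 1 + t - 1) - (m:ℤ) * ((m:ℤ) + 1)
      = (t:ℤ) * (t + 2 * m + 1) := by ring
  rw [this]
  positivity

noncomputable def bb (m : ℕ) (c : ℕ → ℂ) (lam : ℂ) : ℕ → ℂ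
  | 0 => 1
  | 1 => 0
  | (t+2) => (A m ((m:ℤ) + 1) (t+2))⁻¹ *
      (lam * bb m c lam t - ∑ j ∈ Finset.range (t+1), (if j = 0 then 0 else c j) * bb m c lam (t - j))
  decreasing_by all_goals omega

lemma d_eq (b : ℕ → ℂ) (n : ℕ) :
    d c b n = ∑ j ∈ Finset.range (n + 1), (if j = 0 then 0 else c j) * b (n - j) := by
  rw [d, Finset.Nat.sum_antidiagonal_eq_sum_range_succ_mk]

lemma bb_sol :
    laurentDeriv (laurentDeriv (L ((m:ℤ) + 1) (bb m c lam))) + U m c * L ((m:ℤ) + 1) (bb m c lam)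
      = lam • L ((m:ℤ) + 1) (bb m c lam) := by
  rw [sol_iff]
  intro t
  match t with
  | 0 => simp [A_zero_m1]
  | 1 => simp [bb]
  | (t+2) =>
    rw [if_pos (by omega), show t + 2 - 2 = t from by omega, d_eq]
    rw [bb, mul_inv_cancel_left₀ (A_ne_zero m (t+2) (by omega))]
    ring

lemma tail_coeff_low (x : LaurentSeries ℂ) (k : ℤ) (hx : ∀ j, j ≤ k - 1 → x.coeff j = 0) :
    (ofPowerSeries ℤ ℂ (tailPS c) * x).coeff k = 0 := by
  by_contra h
  obtain ⟨i, hi, j, hj, rfl⟩ := support_mul_subset ((mem_support _ _).2 h)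
  rw [HahnSeries.mem_support] at hi hj
  have hi1 : 1 ≤ i := by
    by_contra hi0
    rcases lt_or_eq_of_le (by omega : i ≤ 0) with h' | h'
    · exact hi (ofPS_coeff_neg _ _ h')
    · rw [h', ofPS_coeff_nonneg _ _ le_rfl] at hi
      simp [tailPS] at hi
  have hx' : ∀ j' : ℤ, j' ≤ i + j - 1 → x.coeff j' = 0 := hx
  exact hj (hx' j (by omega))

lemma E_coeff_low (x : LaurentSeries ℂ) (v : ℤ) (hv : ∀ j, j < v → x.coeff j = 0) :
    (laurentDeriv (laurentDeriv x) + U m c * x - lam • x).coeff (v - 2)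
      = ((((v - 1) * v : ℤ) : ℂ) - mu m) * x.coeff v := by
  rw [HahnSeries.coeff_sub, HahnSeries.coeff_add, U, add_mul, HahnSeries.coeff_add,
    single_mul_coeff', laurentDeriv_coeff, laurentDeriv_coeff, HahnSeries.coeff_smul,
    tail_coeff_low c x (v - 2) (fun j hj => hv j (by omega)),
    hv (v - 2) (by omega),
    show v - 2 + 1 + 1 = v from by ring,
    show v - 2 - -2 = v from by ring]
  simp only [smul_eq_mul]
  push_cast
  ring

lemma order_cases (x : LaurentSeries ℂ) (h0 : x ≠ 0)
    (hs : laurentDeriv (laurentDeriv x) + U m c * x = lam • x) :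
    x.order = -(m:ℤ) ∨ x.order = (m:ℤ) + 1 := by
  have hE : (laurentDeriv (laurentDeriv x) + U m c * x - lam • x) = 0 := sub_eq_zero.2 hs
  have h1 := E_coeff_low m c lam x x.order (fun j hj => coeff_eq_zero_of_lt_order hj)
  rw [hE, HahnSeries.coeff_zero] at h1
  have h2 : (((x.order - 1) * x.order : ℤ) : ℂ) - mu m = 0 := by
    rcases mul_eq_zero.1 h1.symm with h | h
    · exact h
    · exact absurd h ((coeff_order_eq_zero.not.mpr h0))
  rw [mu_cast, ← Int.cast_sub, Int.cast_eq_zero, sub_eq_zero] at h2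
  have h3 : (x.order + m) * (x.order - ((m:ℤ) + 1)) = 0 := by linear_combination h2
  rcases mul_eq_zero.1 h3 with h | h
  · left; omega
  · right; omega

lemma sol_smul (r : ℂ) (x : LaurentSeries ℂ)
    (hs : laurentDeriv (laurentDeriv x) + U m c * x = lam • x) :
    laurentDeriv (laurentDeriv (r • x)) + U m c * (r • x) = lam • (r • x) := by
  have hsingle : ∀ y : LaurentSeries ℂ, r • y = single (0:ℤ) r * y := by
    intro y
    ext k
    rw [single_mul_coeff', HahnSeries.coeff_smul, smul_eq_mul, sub_zero]
  have hc : U m c * (r • x) = r • (U m c * x) := by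
    rw [hsingle, mul_left_comm, ← hsingle]
  rw [laurentDeriv_smul, laurentDeriv_smul, hc]
  ext k
  have h2 := congrArg (fun y : LaurentSeries ℂ => y.coeff k) hs
  simp only [HahnSeries.coeff_add, HahnSeries.coeff_smul, smul_eq_mul] at h2 ⊢
  linear_combination r * h2

lemma sol_sub (x y : LaurentSeries ℂ)
    (hx : laurentDeriv (laurentDeriv x) + U m c * x = lam • x)
    (hy : laurentDeriv (laurentDeriv y) + U m c * y = lam • y) :
    laurentDeriv (laurentDeriv (x - y)) + U m c * (x - y) = lam • (x - y) := by
  rw [laurentDeriv_sub, laurentDeriv_sub, mul_sub, smul_sub, ← hx, ← hy]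
  ring

lemma repr_lemma (x : LaurentSeries ℂ) (hlow : ∀ k : ℤ, k < -(m:ℤ) → x.coeff k = 0) :
    x = L (-(m:ℤ)) (fun n => x.coeff ((n : ℤ) - m)) := by
  ext k
  rw [L_coeff]
  by_cases h : -(m:ℤ) ≤ k
  · rw [if_pos h]
    congr 1
    omega
  · rw [if_neg h]
    exact hlow k (by omega)

lemma bb_zero : bb m c lam 0 = 1 := by rw [bb]

lemma L_up_coeff_neg : (L ((m:ℤ) + 1) (bb m c lam)).coeff (-(m:ℤ)) = 0 := by
  rw [L_coeff, if_neg (by omega)]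

lemma L_up_coeff_top : (L ((m:ℤ) + 1) (bb m c lam)).coeff ((m:ℤ) + 1) = 1 := by
  rw [L_coeff, if_pos le_rfl, show ((m:ℤ) + 1 - ((m:ℤ) + 1)).toNat = 0 from by omega, bb_zero]

end Scr

/-- For `u = −m(m+1)z⁻² + Σ_{j≥1} c_j z^j ∈ ℂ((z))` and fixed `λ ∈ ℂ`, the equation
`ψ'' + uψ = λψ` admits two linearly independent formal Laurent series solutions
if and only if it admits a solution of the form `ψ = Σ_{n≥0} a_n z^{n−m}` with `a₀ = 1`. -/
theorem two_independent_solutions_iff_lower_index_solution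
    (m : ℕ) (c : ℕ → ℂ) (u : LaurentSeries ℂ)
    (hu : u = HahnSeries.single (-2 : ℤ) (-((m : ℂ) * ((m : ℂ) + 1)))
        + HahnSeries.ofPowerSeries ℤ ℂ (PowerSeries.mk fun j => if j = 0 then 0 else c j))
    (lam : ℂ) :
    (∃ ψ₁ ψ₂ : LaurentSeries ℂ,
        laurentDeriv (laurentDeriv ψ₁) + u * ψ₁ = lam • ψ₁ ∧
        laurentDeriv (laurentDeriv ψ₂) + u * ψ₂ = lam • ψ₂ ∧
        LinearIndependent ℂ ![ψ₁, ψ₂])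
      ↔ (∃ ψ : LaurentSeries ℂ,
          laurentDeriv (laurentDeriv ψ) + u * ψ = lam • ψ ∧
          ∃ a : ℕ → ℂ, a 0 = 1 ∧
            ψ = HahnSeries.single (-(m : ℤ)) 1
              * HahnSeries.ofPowerSeries ℤ ℂ (PowerSeries.mk a)) := by
  have hU : u = Scr.U m c := hu
  constructor
  · rintro ⟨ψ₁, ψ₂, h1, h2, hind⟩
    rw [hU] at h1 h2
    have hne1 : ψ₁ ≠ 0 := by
      have := hind.ne_zero 0
      simpa using this
    have hne2 : ψ₂ ≠ 0 := by
      have := hind.ne_zero 1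
      simpa using this
    have pair := LinearIndependent.pair_iff.1 hind
    -- find a solution of order -m
    have key : ∃ φ : LaurentSeries ℂ, φ ≠ 0 ∧
        (laurentDeriv (laurentDeriv φ) + Scr.U m c * φ = lam • φ) ∧ φ.order = -(m:ℤ) := by
      rcases Scr.order_cases m c lam ψ₁ hne1 h1 with o1 | o1
      · exact ⟨ψ₁, hne1, h1, o1⟩
      rcases Scr.order_cases m c lam ψ₂ hne2 h2 with o2 | o2
      · exact ⟨ψ₂, hne2, h2, o2⟩
      set α := ψ₁.coeff ((m:ℤ) + 1) with hα_def
      set β := ψ₂.coeff ((m:ℤ) + 1) with hβ_def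
      have hα : α ≠ 0 := by
        have := (HahnSeries.coeff_order_eq_zero.not.mpr hne1)
        rwa [o1] at this
      set φ := α • ψ₂ - β • ψ₁ with hφ_def
      have hsol : laurentDeriv (laurentDeriv φ) + Scr.U m c * φ = lam • φ :=
        Scr.sol_sub m c lam _ _ (Scr.sol_smul m c lam α ψ₂ h2) (Scr.sol_smul m c lam β ψ₁ h1)
      have hφne : φ ≠ 0 := by
        intro h0
        have hcomb : (-β) • ψ₁ + α • ψ₂ = 0 := by
          rw [show (-β) • ψ₁ = -(β • ψ₁) from neg_smul β ψ₁, neg_add_eq_zero]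
          rw [hφ_def, sub_eq_zero] at h0
          exact h0.symm
        exact hα ((pair _ _ hcomb).2)
      have hcoeff : φ.coeff ((m:ℤ) + 1) = 0 := by
        rw [hφ_def, HahnSeries.coeff_sub, HahnSeries.coeff_smul, HahnSeries.coeff_smul,
          ← hα_def, ← hβ_def, smul_eq_mul, smul_eq_mul]
        ring
      refine ⟨φ, hφne, hsol, ?_⟩
      rcases Scr.order_cases m c lam φ hφne hsol with o | o
      · exact o
      · exfalso
        have := (HahnSeries.coeff_order_eq_zero.not.mpr hφne)
        rw [o, hcoeff] at this
        exact this rfl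
    obtain ⟨φ, hφne, hφsol, hφord⟩ := key
    have hγ : φ.coeff (-(m:ℤ)) ≠ 0 := by
      have := (HahnSeries.coeff_order_eq_zero.not.mpr hφne)
      rwa [hφord] at this
    set γ := φ.coeff (-(m:ℤ)) with hγ_def
    set ψ := γ⁻¹ • φ with hψ_def
    have hψsol : laurentDeriv (laurentDeriv ψ) + Scr.U m c * ψ = lam • ψ :=
      Scr.sol_smul m c lam γ⁻¹ φ hφsol
    have hψlow : ∀ k : ℤ, k < -(m:ℤ) → ψ.coeff k = 0 := by
      intro k hk
      rw [hψ_def, HahnSeries.coeff_smul, HahnSeries.coeff_eq_zero_of_lt_order (by rw [hφord]; exact hk),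
        smul_zero]
    refine ⟨ψ, by rw [hU]; exact hψsol, fun n => ψ.coeff ((n : ℤ) - m), ?_, ?_⟩
    · show ψ.coeff (((0:ℕ) : ℤ) - m) = 1
      rw [show (((0:ℕ):ℤ) - m) = -(m:ℤ) from by omega, hψ_def, HahnSeries.coeff_smul, ← hγ_def,
        smul_eq_mul, inv_mul_cancel₀ hγ]
    · exact Scr.repr_lemma m ψ hψlow
  · rintro ⟨ψ, hψ, a, ha0, hrepr⟩
    rw [hU] at hψ
    have hψL : ψ = Scr.L (-(m:ℤ)) a := hrepr
    have hψcoeff : ψ.coeff (-(m:ℤ)) = 1 := by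
      rw [hψL, Scr.L_coeff, if_pos le_rfl, show (-(m:ℤ) - -(m:ℤ)).toNat = 0 from by omega, ha0]
    refine ⟨ψ, Scr.L ((m:ℤ) + 1) (Scr.bb m c lam), by rw [hU]; exact hψ,
      by rw [hU]; exact Scr.bb_sol m c lam, ?_⟩
    rw [LinearIndependent.pair_iff]
    intro s t hst
    have e1 := congrArg (fun y : LaurentSeries ℂ => y.coeff (-(m:ℤ))) hst
    simp only [HahnSeries.coeff_add, HahnSeries.coeff_smul, HahnSeries.coeff_zero,
      smul_eq_mul, hψcoeff, Scr.L_up_coeff_neg, mul_one, mul_zero, add_zero] at e1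
    subst e1
    have e2 := congrArg (fun y : LaurentSeries ℂ => y.coeff ((m:ℤ) + 1)) hst
    simp only [HahnSeries.coeff_add, HahnSeries.coeff_smul, HahnSeries.coeff_zero,
      smul_eq_mul, Scr.L_up_coeff_top, mul_one, zero_mul, zero_add] at e2
    exact ⟨rfl, e2⟩
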